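/- Suppose f : ℝᴺ → ℝᴺ is continuously differentiable, and let F(θ) = (J(θ)ᵀJ(θ))⁻¹ J(θ)ᵀ f(g(θ)). For any t₀ ∈ ℝ, ε > 0 and θ₀ ∈ ℝⁿ, if θ₁, θ₂ : ℝ → ℝⁿ both satisfy θᵢ(t₀) = θ₀ and θᵢ′(t) = F(θᵢ(t)) for all t ∈ [t₀, t₀ + ε] (i = 1, 2), then θ₁(t) = θ₂(t) for all t ∈ [t₀, t₀ + ε]; i.e., the solution of the Neural Galerkin dynamics on quadratic manifolds is unique. -/

import Mathlib

open Matrix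

private lemma contDiff_entrywise_det {E : Type*} [NormedAddCommGroup E] [NormedSpace ℝ E]
    {m : Type*} [Fintype m] [DecidableEq m] {A : E → Matrix m m ℝ}
    (hA : ∀ i j, ContDiff ℝ 1 (fun θ => A θ i j)) :
    ContDiff ℝ 1 (fun θ => (A θ).det) := by
  simp_rw [Matrix.det_apply']
  exact ContDiff.sum fun σ _ =>
    contDiff_const.mul (contDiff_prod fun i _ => hA (σ i) i)

theorem neural_galerkin_uniqueness
    (N n : ℕ) (hN : 0 < N) (hn : 0 < n)
    (V : Matrix (Fin N) (Fin n) ℝ) (W : Matrix (Fin N) (Fin n × Fin n) ℝ)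
    (hV : Vᵀ * V = 1) (hVW : Vᵀ * W = 0)
    (s₀ : Fin N → ℝ)
    (h : (Fin n → ℝ) → (Fin n × Fin n) → ℝ)
    (hh : ∀ θ p, h θ p = θ p.1 * θ p.2)
    (K : (Fin n → ℝ) → Matrix (Fin N) (Fin n) ℝ)
    (hK : ∀ θ v, (K θ).mulVec v = W.mulVec (fun p => θ p.1 * v p.2 + v p.1 * θ p.2))
    (g : (Fin n → ℝ) → (Fin N → ℝ))
    (hg : ∀ θ, g θ = s₀ + V.mulVec θ + W.mulVec (h θ))
    (f : (Fin N → ℝ) → (Fin N → ℝ)) (hf : ContDiff ℝ 1 f)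
    (F : (Fin n → ℝ) → (Fin n → ℝ))
    (hF : ∀ θ, F θ = (((V + K θ)ᵀ * (V + K θ))⁻¹).mulVec ((V + K θ)ᵀ.mulVec (f (g θ))))
    (t₀ ε : ℝ) (hε : 0 < ε) (θ₀ : Fin n → ℝ)
    (θ₁ θ₂ : ℝ → (Fin n → ℝ))
    (hinit₁ : θ₁ t₀ = θ₀) (hinit₂ : θ₂ t₀ = θ₀)
    (hderiv₁ : ∀ t ∈ Set.Icc t₀ (t₀ + ε),
      HasDerivWithinAt θ₁ (F (θ₁ t)) (Set.Icc t₀ (t₀ + ε)) t)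
    (hderiv₂ : ∀ t ∈ Set.Icc t₀ (t₀ + ε),
      HasDerivWithinAt θ₂ (F (θ₂ t)) (Set.Icc t₀ (t₀ + ε)) t) :
    ∀ t ∈ Set.Icc t₀ (t₀ + ε), θ₁ t = θ₂ t := by
  -- coordinate projections are smooth
  have hproj : ∀ {m : ℕ} (k : Fin m), ContDiff ℝ 1 (fun θ : Fin m → ℝ => θ k) := by
    intro m k
    exact (ContinuousLinearMap.proj k : (Fin m → ℝ) →L[ℝ] ℝ).contDiff
  -- entries of K are smooth in θ
  have hKentry : ∀ i j, ContDiff ℝ 1 (fun θ => K θ i j) := by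
    intro i j
    have hent : ∀ θ, K θ i j
        = ∑ p : Fin n × Fin n, W i p * (θ p.1 * (Pi.single j 1 : Fin n → ℝ) p.2 + (Pi.single j 1 : Fin n → ℝ) p.1 * θ p.2) := by
      intro θ
      have := congrFun (hK θ (Pi.single j 1)) i
      rw [Matrix.mulVec_single] at this
      simpa [Matrix.mulVec, dotProduct] using this
    simp_rw [hent]
    exact ContDiff.sum fun p _ =>
      contDiff_const.mul ((hproj p.1).mul contDiff_const |>.add
        (contDiff_const.mul (hproj p.2)))
  have hJentry : ∀ i j, ContDiff ℝ 1 (fun θ => (V + K θ) i j) := by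
    intro i j
    simpa [Matrix.add_apply] using contDiff_const.add (hKentry i j)
  -- M θ := J(θ)ᵀ J(θ)
  set M : (Fin n → ℝ) → Matrix (Fin n) (Fin n) ℝ :=
    fun θ => (V + K θ)ᵀ * (V + K θ) with hM
  have hMentry : ∀ i j, ContDiff ℝ 1 (fun θ => M θ i j) := by
    intro i j
    have : ∀ θ, M θ i j = ∑ k, (V + K θ) k i * (V + K θ) k j := by
      intro θ; simp [hM, Matrix.mul_apply, Matrix.transpose_apply]
    simp_rw [this]
    exact ContDiff.sum fun k _ => (hJentry k i).mul (hJentry k j)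
  -- VᵀK θ = 0
  have hVK : ∀ θ, Vᵀ * K θ = 0 := by
    intro θ
    ext i j
    have h1 : (Vᵀ * K θ) *ᵥ Pi.single j 1 = fun i => (Vᵀ * K θ) i j * 1 :=
      Matrix.mulVec_single _ _ _
    have h2 : (Vᵀ * K θ) *ᵥ Pi.single j 1 = 0 := by
      rw [← Matrix.mulVec_mulVec, hK θ]
      rw [Matrix.mulVec_mulVec, hVW, Matrix.zero_mulVec]
    have := congrFun h1 i
    rw [h2] at this
    simpa using this.symm
  -- M θ = 1 + (K θ)ᵀ (K θ), positive definite
  have hMpos : ∀ θ, (M θ).PosDef := by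
    intro θ
    have hKV : (K θ)ᵀ * V = 0 := by
      have := congrArg Matrix.transpose (hVK θ)
      simpa [Matrix.transpose_mul] using this
    have hMeq : M θ = 1 + (K θ)ᵀ * (K θ) := by
      simp only [hM, Matrix.transpose_add, Matrix.add_mul, Matrix.mul_add, hV, hVK θ, hKV]
      abel
    rw [hMeq]
    exact Matrix.PosDef.add_posSemidef Matrix.PosDef.one
      (by simpa [Matrix.conjTranspose_eq_transpose_of_trivial] using
        Matrix.posSemidef_conjTranspose_mul_self (K θ))
  have hdet : ∀ θ, (M θ).det ≠ 0 := fun θ => (hMpos θ).det_pos.ne'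
  have hdetC : ContDiff ℝ 1 (fun θ => (M θ).det) := contDiff_entrywise_det hMentry
  -- entries of (M θ)⁻¹ are smooth
  have hinvEntry : ∀ i j, ContDiff ℝ 1 (fun θ => (M θ)⁻¹ i j) := by
    intro i j
    have heq : ∀ θ, (M θ)⁻¹ i j = ((M θ).det)⁻¹ * (M θ).adjugate i j := by
      intro θ
      rw [Matrix.inv_def, Ring.inverse_eq_inv']
      simp [Matrix.smul_apply]
    simp_rw [heq]
    refine (hdetC.inv hdet).mul ?_
    have hadj : ∀ θ, (M θ).adjugate i j = ((M θ).updateRow j (Pi.single i 1)).det := by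
      intro θ; rw [Matrix.adjugate_apply]
    simp_rw [hadj]
    apply contDiff_entrywise_det
    intro a b
    rcases eq_or_ne a j with rfl | hne
    · simpa [Matrix.updateRow_apply] using contDiff_const
    · simpa [Matrix.updateRow_apply, hne] using hMentry a b
  -- g is smooth, hence f ∘ g is C¹
  have hgC : ContDiff ℝ 1 g := by
    rw [contDiff_pi]
    intro i
    have : ∀ θ, g θ i = s₀ i + (∑ j, V i j * θ j) + ∑ p : Fin n × Fin n, W i p * (θ p.1 * θ p.2) := by
      intro θ
      simp [hg, hh, Matrix.mulVec, dotProduct]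
    simp_rw [this]
    exact (contDiff_const.add (ContDiff.sum fun j _ => contDiff_const.mul (hproj j))).add
      (ContDiff.sum fun p _ => contDiff_const.mul ((hproj p.1).mul (hproj p.2)))
  have hfg : ContDiff ℝ 1 (fun θ => f (g θ)) := hf.comp hgC
  have hfgk : ∀ k, ContDiff ℝ 1 (fun θ => f (g θ) k) := fun k => (hproj k).comp hfg
  -- F is C¹
  have hFC : ContDiff ℝ 1 F := by
    rw [contDiff_pi]
    intro i
    have : ∀ θ, F θ i = ∑ j, (M θ)⁻¹ i j * ∑ k, (V + K θ) k j * f (g θ) k := by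
      intro θ
      rw [hF]
      simp [Matrix.mulVec, dotProduct, Matrix.transpose_apply, hM]
    simp_rw [this]
    exact ContDiff.sum fun j _ => (hinvEntry i j).mul
      (ContDiff.sum fun k _ => (hJentry k j).mul (hfgk k))
  -- trajectories are continuous on the interval, images are bounded
  have hab : t₀ ≤ t₀ + ε := by linarith
  have hc₁ : ContinuousOn θ₁ (Set.Icc t₀ (t₀ + ε)) :=
    fun t ht => (hderiv₁ t ht).continuousWithinAt
  have hc₂ : ContinuousOn θ₂ (Set.Icc t₀ (t₀ + ε)) :=
    fun t ht => (hderiv₂ t ht).continuousWithinAt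
  obtain ⟨R, hR⟩ : ∃ R, ∀ x ∈ θ₁ '' Set.Icc t₀ (t₀ + ε) ∪ θ₂ '' Set.Icc t₀ (t₀ + ε), ‖x‖ ≤ R := by
    have hcomp : IsCompact (θ₁ '' Set.Icc t₀ (t₀ + ε) ∪ θ₂ '' Set.Icc t₀ (t₀ + ε)) :=
      ((isCompact_Icc.image_of_continuousOn hc₁).union
        (isCompact_Icc.image_of_continuousOn hc₂))
    obtain ⟨R, hR⟩ := hcomp.isBounded.subset_closedBall 0
    exact ⟨R, fun x hx => by simpa using hR hx⟩
  set s : Set (Fin n → ℝ) := Metric.closedBall 0 R with hs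
  have hmem₁ : ∀ t ∈ Set.Icc t₀ (t₀ + ε), θ₁ t ∈ s := by
    intro t ht
    simp only [hs, Metric.mem_closedBall, dist_zero_right]
    exact hR _ (Or.inl ⟨t, ht, rfl⟩)
  have hmem₂ : ∀ t ∈ Set.Icc t₀ (t₀ + ε), θ₂ t ∈ s := by
    intro t ht
    simp only [hs, Metric.mem_closedBall, dist_zero_right]
    exact hR _ (Or.inr ⟨t, ht, rfl⟩)
  -- F is Lipschitz on s
  obtain ⟨C, hC⟩ : ∃ C, ∀ x ∈ s, ‖fderiv ℝ F x‖ ≤ C := by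
    obtain ⟨C, hC⟩ := (isCompact_closedBall (0 : Fin n → ℝ) R).exists_bound_of_continuousOn
      ((hFC.continuous_fderiv one_ne_zero).continuousOn)
    exact ⟨C, hC⟩
  set Cn : NNReal := ⟨max C 0, le_max_right _ _⟩ with hCn
  have hlip : LipschitzOnWith Cn F s := by
    apply (convex_closedBall _ _).lipschitzOnWith_of_nnnorm_hasFDerivWithin_le
      (f' := fun x => fderiv ℝ F x)
      (fun x _ => (hFC.differentiable one_ne_zero x).hasFDerivAt.hasFDerivWithinAt)
    intro x hx
    have : ‖fderiv ℝ F x‖ ≤ max C 0 := le_trans (hC x hx) (le_max_left _ _)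
    exact this
  -- apply uniqueness theorem
  have := ODE_solution_unique_of_mem_Icc_right
    (v := fun _ x => F x) (s := fun _ => s) (K := Cn)
    (fun _ _ => hlip) hc₁
    (fun t ht => (hderiv₁ t (Set.Ico_subset_Icc_self ht)).mono_of_mem_nhdsWithin
      (Icc_mem_nhdsGE_of_mem ht))
    (fun t ht => hmem₁ t (Set.Ico_subset_Icc_self ht))
    hc₂
    (fun t ht => (hderiv₂ t (Set.Ico_subset_Icc_self ht)).mono_of_mem_nhdsWithin
      (Icc_mem_nhdsGE_of_mem ht))
    (fun t ht => hmem₂ t (Set.Ico_subset_Icc_self ht))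
    (by rw [hinit₁, hinit₂])
  exact fun t ht => this ht
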